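/- Every nonempty admissible set of words generated by a single word w with cb(w) ≠ 0 equals W^(|cb(w)|), i.e. the set of words whose color balance is divisible by |cb(w)|. -/

import Mathlib

/-- Words on the two-letter alphabet {◦,•}: `true` = ◦ (white), `false` = • (black). -/
abbrev Word := List Bool

/-- Color balance: number of white letters minus number of black letters. -/
def cb (w : Word) : ℤ := (w.count true : ℤ) - (w.count false : ℤ)

/-- Conjugation: reverse the word and swap the colors. -/
def wconj (w : Word) : Word := (w.map (fun b => !b)).reverse

/-- Elementary cancellation: deletion of an adjacent pair ◦• or •◦. -/
def ECancel (w w' : Word) : Prop :=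
  ∃ (u v : Word) (x : Bool), w = u ++ x :: (!x) :: v ∧ w' = u ++ v

/-- Concatenation of a list of words. -/
def cat (L : List Word) : Word := L.foldr (· ++ ·) []

/-- `W^(k)`: words whose color balance is divisible by `k`. -/
def Wmod (k : ℕ) : Set Word := {w | (k : ℤ) ∣ cb w}

/-- `W^(◦,k)`: words of balance 0 all of whose prefix balances lie in `[0,k]`. -/
def Wcirc (k : ℕ) : Set Word :=
  {w | cb w = 0 ∧ ∀ l : ℕ, 0 ≤ cb (w.take l) ∧ cb (w.take l) ≤ (k : ℤ)}

/-- `W^(•,k)`: words of balance 0 all of whose prefix balances lie in `[-k,0]`. -/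
def Wbul (k : ℕ) : Set Word :=
  {w | cb w = 0 ∧ ∀ l : ℕ, -(k : ℤ) ≤ cb (w.take l) ∧ cb (w.take l) ≤ 0}

/-- `W^(◦,∞)`: words of balance 0 with all prefix balances nonnegative. -/
def WcircInf : Set Word := {w | cb w = 0 ∧ ∀ l : ℕ, 0 ≤ cb (w.take l)}

/-- `W^(•,∞)`: words of balance 0 with all prefix balances nonpositive. -/
def WbulInf : Set Word := {w | cb w = 0 ∧ ∀ l : ℕ, cb (w.take l) ≤ 0}

/-- Admissible set of words: closed under concatenation, conjugation and
elementary cancellations. -/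
def Adm (S : Set Word) : Prop :=
  (∀ w ∈ S, ∀ w' ∈ S, w ++ w' ∈ S) ∧
  (∀ w ∈ S, wconj w ∈ S) ∧
  (∀ w ∈ S, ∀ w', ECancel w w' → w' ∈ S)

/-- The admissible set generated by a set of words. -/
def genA (A : Set Word) : Set Word := ⋂₀ {S | Adm S ∧ A ⊆ S}

namespace Stmt8

lemma cb_nil : cb ([] : Word) = 0 := rfl

lemma cb_cons (x : Bool) (a : Word) : cb (x :: a) = (if x then 1 else -1) + cb a := by
  cases x <;> simp [cb, List.count_cons] <;> push_cast <;> ring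

lemma cb_append (a b : Word) : cb (a ++ b) = cb a + cb b := by
  simp [cb, List.count_append]; push_cast; ring

lemma cb_single (x : Bool) : cb [x] = if x then 1 else -1 := by
  cases x <;> rfl

lemma cb_replicate (n : ℕ) (x : Bool) :
    cb (List.replicate n x) = if x then (n : ℤ) else -(n : ℤ) := by
  induction n with
  | zero => simp [cb]
  | succ n ih =>
      cases x <;> simp [List.replicate_succ, cb_cons, ih] <;> push_cast <;> ring

lemma wconj_cons (x : Bool) (a : Word) : wconj (x :: a) = wconj a ++ [!x] := by
  simp [wconj]

lemma cb_wconj (a : Word) : cb (wconj a) = - cb a := by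
  induction a with
  | nil => rfl
  | cons x a ih =>
      rw [wconj_cons, cb_append, ih]
      cases x <;> simp [cb_cons, cb_nil, cb_single] <;> ring

lemma count_tf (a : Word) : a.count true + a.count false = a.length := by
  induction a with
  | nil => rfl
  | cons x a ih => cases x <;> simp [List.count_cons] <;> omega

lemma mem_genA_iff {A : Set Word} {z : Word} :
    z ∈ genA A ↔ ∀ S, Adm S → A ⊆ S → z ∈ S := by
  constructor
  · intro h S hS hA; exact h S ⟨hS, hA⟩
  · intro h S hS; exact h S hS.1 hS.2

lemma genA_concat {A : Set Word} {a b : Word} (ha : a ∈ genA A) (hb : b ∈ genA A) :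
    a ++ b ∈ genA A := by
  rw [mem_genA_iff] at *
  intro S hS hA
  exact hS.1 _ (ha S hS hA) _ (hb S hS hA)

lemma genA_conj {A : Set Word} {a : Word} (ha : a ∈ genA A) : wconj a ∈ genA A := by
  rw [mem_genA_iff] at *
  intro S hS hA
  exact hS.2.1 _ (ha S hS hA)

lemma genA_cancel {A : Set Word} {a b : Word} (ha : a ∈ genA A) (h : ECancel a b) :
    b ∈ genA A := by
  rw [mem_genA_iff] at *
  intro S hS hA
  exact hS.2.2 _ (ha S hS hA) _ h

lemma subset_genA {A : Set Word} : A ⊆ genA A := by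
  intro x hx
  rw [mem_genA_iff]
  intro S _ hA
  exact hA hx

lemma exists_adj : ∀ (c : Word), 0 < c.count true → 0 < c.count false →
    ∃ p x q, c = p ++ x :: (!x) :: q := by
  intro c
  induction c with
  | nil => simp
  | cons a rest ih =>
      intro ht hf
      match rest with
      | [] => cases a <;> simp_all
      | b :: rest2 =>
          by_cases hba : b = !a
          · exact ⟨[], a, rest2, by simp [hba]⟩
          · have hba' : b = a := by cases a <;> cases b <;> simp_all
            subst hba'
            have hrt : 0 < (b :: rest2).count true := by
              cases b <;> simp_all [List.count_cons] <;> omega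
            have hrf : 0 < (b :: rest2).count false := by
              cases b <;> simp_all [List.count_cons] <;> omega
            obtain ⟨p, x, q, hpq⟩ := ih hrt hrf
            exact ⟨b :: p, x, q, by simp [hpq]⟩

lemma cb_zero_adj {c : Word} (hne : c ≠ []) (h0 : cb c = 0) :
    ∃ p x q, c = p ++ x :: (!x) :: q := by
  have h1 : c.count true = c.count false := by
    have : (c.count true : ℤ) = c.count false := by
      unfold cb at h0; omega
    exact_mod_cast this
  have h2 := count_tf c
  have hl : c.length ≠ 0 := by simpa using hne
  apply exists_adj <;> omega

lemma chunk_remove {A : Set Word} : ∀ (n : ℕ) (c : Word), c.length ≤ n → cb c = 0 →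
    ∀ a b : Word, a ++ (c ++ b) ∈ genA A → a ++ b ∈ genA A := by
  intro n
  induction n with
  | zero =>
      intro c hc _ a b h
      have : c = [] := by
        cases c with
        | nil => rfl
        | cons x t => simp at hc
      subst this
      simpa using h
  | succ n ih =>
      intro c hc h0 a b h
      rcases eq_or_ne c [] with rfl | hne
      · simpa using h
      · obtain ⟨p, x, q, rfl⟩ := cb_zero_adj hne h0
        have hstep : ECancel (a ++ ((p ++ x :: (!x) :: q) ++ b)) ((a ++ p) ++ (q ++ b)) :=
          ⟨a ++ p, q ++ b, x, by simp, rfl⟩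
        have h2 := genA_cancel h hstep
        have h0' : cb (p ++ q) = 0 := by
          rw [cb_append] at *
          rw [cb_cons, cb_cons] at h0
          cases x <;> simp at h0 <;> linarith
        have hlen : (p ++ q).length ≤ n := by
          simp at hc ⊢; omega
        exact ih (p ++ q) hlen h0' a b (by simpa [List.append_assoc] using h2)

lemma to_const {A : Set Word} : ∀ (n : ℕ) (v : Word), v.length ≤ n → v ∈ genA A →
    0 ≤ cb v → List.replicate (cb v).toNat true ∈ genA A := by
  intro n
  induction n with
  | zero =>
      intro v hv hmem _
      have : v = [] := by
        cases v with
        | nil => rfl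
        | cons x t => simp at hv
      subst this
      simpa [cb_nil] using hmem
  | succ n ih =>
      intro v hv hmem h0
      by_cases hf : v.count false = 0
      · have hall : ∀ b ∈ v, b = true := by
          intro b hb
          cases b
          · exfalso; have := List.count_pos_iff.mpr hb; omega
          · rfl
        have hrepl : v = List.replicate v.length true := List.eq_replicate_length.mpr hall
        have hct : v.count true = v.length := by have := count_tf v; omega
        have hcb : cb v = (v.length : ℤ) := by unfold cb; omega
        rw [hcb]
        simpa [← hrepl] using hmem
      · have hct : 0 < v.count true := by
          have h2 := count_tf v
          have : (v.count true : ℤ) - v.count false = cb v := rfl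
          omega
        obtain ⟨p, x, q, rfl⟩ := exists_adj v hct (by omega)
        have hstep : ECancel (p ++ x :: (!x) :: q) (p ++ q) := ⟨p, q, x, rfl, rfl⟩
        have hmem2 := genA_cancel hmem hstep
        have hcbeq : cb (p ++ q) = cb (p ++ x :: (!x) :: q) := by
          rw [cb_append, cb_append, cb_cons, cb_cons]
          cases x <;> simp <;> ring
        have hres := ih (p ++ q) (by simp at hv ⊢; omega) hmem2 (by omega)
        rw [hcbeq] at hres
        exact hres


lemma repl_split (a k : ℕ) (h : a ≤ k) (x : Bool) :
    List.replicate k x = List.replicate a x ++ List.replicate (k - a) x := by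
  rw [← List.replicate_add]; congr 1; omega

lemma repl_split' (a k : ℕ) (h : a ≤ k) (x : Bool) :
    List.replicate k x = List.replicate (k - a) x ++ List.replicate a x := by
  rw [← List.replicate_add]; congr 1; omega

lemma wconj_replicate_true (n : ℕ) :
    wconj (List.replicate n true) = List.replicate n false := by
  simp [wconj, List.map_replicate, List.reverse_replicate]

lemma block_true (w : Word) : List.replicate (cb w).natAbs true ∈ genA {w} := by
  have hw : w ∈ genA ({w} : Set Word) := subset_genA rfl
  rcases le_or_gt 0 (cb w) with h0 | h0
  · have := to_const w.length w le_rfl hw h0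
    have heq : (cb w).toNat = (cb w).natAbs := by omega
    rwa [heq] at this
  · have hconj := genA_conj hw
    have hcb : cb (wconj w) = - cb w := cb_wconj w
    have := to_const (wconj w).length (wconj w) le_rfl hconj (by omega)
    have heq : (cb (wconj w)).toNat = (cb w).natAbs := by omega
    rwa [heq] at this

lemma block_mem (w : Word) (x : Bool) :
    List.replicate (cb w).natAbs x ∈ genA {w} := by
  cases x
  · have := genA_conj (block_true w)
    rwa [wconj_replicate_true] at this
  · exact block_true w

lemma cb_powpair (m : ℕ) (x : Bool) :
    cb (List.replicate m x ++ List.replicate m (!x)) = 0 := by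
  rw [cb_append, cb_replicate, cb_replicate]
  cases x <;> simp

lemma pow_mem (w : Word) (hw : cb w ≠ 0) :
    ∀ (a : ℕ) (x : Bool),
      List.replicate a x ++ List.replicate a (!x) ∈ genA {w} := by
  intro a
  induction a using Nat.strong_induction_on with
  | _ a ih =>
    intro x
    set k := (cb w).natAbs with hk
    have hk1 : 1 ≤ k := by
      have : (cb w).natAbs ≠ 0 := Int.natAbs_ne_zero.mpr hw
      omega
    rcases le_or_gt a k with hak | hak
    · have base : List.replicate k x ++ List.replicate k (!x) ∈ genA {w} :=
        genA_concat (block_mem w x) (block_mem w (!x))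
      have hsplit : List.replicate k x ++ List.replicate k (!x) =
          List.replicate a x ++ ((List.replicate (k - a) x ++ List.replicate (k - a) (!x))
            ++ List.replicate a (!x)) := by
        rw [repl_split a k hak x, repl_split' a k hak (!x)]
        simp only [List.append_assoc]
      rw [hsplit] at base
      exact chunk_remove _ _ le_rfl (cb_powpair (k - a) x) _ _ base
    · have hmid := ih (a - k) (by omega) x
      have heq : List.replicate a x ++ List.replicate a (!x) =
          List.replicate k x ++ ((List.replicate (a - k) x ++ List.replicate (a - k) (!x))
            ++ List.replicate k (!x)) := by
        rw [repl_split k a (by omega) x, repl_split' k a (by omega) (!x)]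
        simp only [List.append_assoc]
      rw [heq]
      exact genA_concat (block_mem w x) (genA_concat hmid (block_mem w (!x)))

lemma nil_mem (w : Word) (hw : cb w ≠ 0) : ([] : Word) ∈ genA {w} := by
  have base := pow_mem w hw (cb w).natAbs true
  have := chunk_remove (c := List.replicate (cb w).natAbs true ++
      List.replicate (cb w).natAbs (!true)) _ le_rfl (cb_powpair _ true)
      ([] : Word) ([] : Word) (by simpa using base)
  simpa using this


lemma cb_take_succ (m : Word) (i : ℕ) (h : i < m.length) :
    cb (m.take (i+1)) = cb (m.take i) + cb [m[i]] := by
  have h2 : m.take (i+1) = m.take i ++ [m[i]] := by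
    rw [List.take_succ, List.getElem?_eq_getElem h]; rfl
  rw [h2, cb_append]

lemma cb_single_cases (x : Bool) : cb [x] = 1 ∨ cb [x] = -1 := by
  cases x <;> simp [cb_single]

lemma ivt : ∀ (n : ℕ) (m : Word) (i j : ℕ), j - i ≤ n → i ≤ j → j ≤ m.length →
    cb (m.take i) ≤ 0 → 0 ≤ cb (m.take j) →
    ∃ l, i ≤ l ∧ l ≤ j ∧ cb (m.take l) = 0 := by
  intro n
  induction n with
  | zero =>
      intro m i j hn hij _ h1 h2
      have : i = j := by omega
      subst this
      exact ⟨i, le_rfl, le_rfl, le_antisymm h1 h2⟩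
  | succ n ih =>
      intro m i j hn hij hjm h1 h2
      rcases eq_or_lt_of_le h1 with heq | hlt
      · exact ⟨i, le_rfl, hij, heq⟩
      · have hinej : i ≠ j := by intro h; subst h; omega
        have hij' : i < j := lt_of_le_of_ne hij hinej
        have him : i < m.length := lt_of_lt_of_le hij' hjm
        have hstep := cb_take_succ m i him
        have hcs := cb_single_cases (m[i])
        have h1' : cb (m.take (i+1)) ≤ 0 := by rcases hcs with h | h <;> omega
        obtain ⟨l, hl1, hl2, hl3⟩ := ih m (i+1) j (by omega) (by omega) hjm h1' h2
        exact ⟨l, by omega, hl2, hl3⟩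

lemma ivt' : ∀ (n : ℕ) (m : Word) (i j : ℕ), j - i ≤ n → i ≤ j → j ≤ m.length →
    0 ≤ cb (m.take i) → cb (m.take j) ≤ 0 →
    ∃ l, i ≤ l ∧ l ≤ j ∧ cb (m.take l) = 0 := by
  intro n
  induction n with
  | zero =>
      intro m i j hn hij _ h1 h2
      have : i = j := by omega
      subst this
      exact ⟨i, le_rfl, le_rfl, le_antisymm h2 h1⟩
  | succ n ih =>
      intro m i j hn hij hjm h1 h2
      rcases eq_or_lt_of_le h1 with heq | hlt
      · exact ⟨i, le_rfl, hij, heq.symm⟩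
      · have hinej : i ≠ j := by intro h; subst h; omega
        have hij' : i < j := lt_of_le_of_ne hij hinej
        have him : i < m.length := lt_of_lt_of_le hij' hjm
        have hstep := cb_take_succ m i him
        have hcs := cb_single_cases (m[i])
        have h1' : 0 ≤ cb (m.take (i+1)) := by rcases hcs with h | h <;> omega
        obtain ⟨l, hl1, hl2, hl3⟩ := ih m (i+1) j (by omega) (by omega) hjm h1' h2
        exact ⟨l, by omega, hl2, hl3⟩

lemma crossing (y : Bool) (mid : Word) (h0 : cb (y :: (mid ++ [y])) = 0) :
    ∃ l, 0 < l ∧ l < (y :: (mid ++ [y])).length ∧ cb ((y :: (mid ++ [y])).take l) = 0 := by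
  set m : Word := y :: (mid ++ [y]) with hm
  have hlen : m.length = mid.length + 2 := by simp [hm]
  have htake1 : m.take 1 = [y] := by simp [hm]
  have htakeL : m.take (mid.length + 1) = y :: mid := by
    rw [hm, show y :: (mid ++ [y]) = (y :: mid) ++ [y] from by simp,
      show mid.length + 1 = (y :: mid).length from by simp, List.take_left]
  have hcbL : cb (y :: mid) = - cb [y] := by
    have : cb m = cb (y :: mid) + cb [y] := by
      rw [hm, show y :: (mid ++ [y]) = (y :: mid) ++ [y] from by simp, cb_append]
    omega
  cases y with
  | false =>
      obtain ⟨l, h1, h2, h3⟩ := ivt (mid.length + 1) m 1 (mid.length + 1) (by omega)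
        (by omega) (by omega) (by rw [htake1]; simp [cb_single]) (by rw [htakeL, hcbL]; simp [cb_single])
      exact ⟨l, by omega, by omega, h3⟩
  | true =>
      obtain ⟨l, h1, h2, h3⟩ := ivt' (mid.length + 1) m 1 (mid.length + 1) (by omega)
        (by omega) (by omega) (by rw [htake1]; simp [cb_single]) (by rw [htakeL, hcbL]; simp [cb_single])
      exact ⟨l, by omega, by omega, h3⟩


lemma cb_powpair' (j : ℕ) (x : Bool) :
    cb (List.replicate j (!x) ++ List.replicate j x) = 0 := by
  have := cb_powpair j (!x)
  simpa using this

lemma split_step (w : Word) (j : ℕ) (x : Bool) (p q : Word)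
    (hp : List.replicate j x ++ p ++ List.replicate j (!x) ∈ genA {w})
    (hq : List.replicate j x ++ q ++ List.replicate j (!x) ∈ genA {w}) :
    List.replicate j x ++ (p ++ q) ++ List.replicate j (!x) ∈ genA {w} := by
  have hu := genA_concat hp hq
  have hres := chunk_remove _ (List.replicate j (!x) ++ List.replicate j x) le_rfl
    (cb_powpair' j x) (List.replicate j x ++ p) (q ++ List.replicate j (!x))
    (by simpa only [List.append_assoc] using hu)
  simpa only [List.append_assoc] using hres

lemma nest_step (w : Word) (hw : cb w ≠ 0) (j' : ℕ) (x : Bool) (mid : Word)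
    (hmid : List.replicate j' x ++ mid ++ List.replicate j' (!x) ∈ genA {w}) :
    List.replicate (j'+1) x ++ ((!x) :: (mid ++ [x])) ++ List.replicate (j'+1) (!x) ∈ genA {w} := by
  have u0 := genA_concat (genA_concat (pow_mem w hw (j'+1) x) hmid) (pow_mem w hw (j'+1) x)
  have r1 := chunk_remove _ (List.replicate j' (!x) ++ List.replicate j' x) le_rfl
    (cb_powpair' j' x)
    (List.replicate (j'+1) x ++ [!x])
    (mid ++ (List.replicate j' (!x) ++ (List.replicate (j'+1) x ++ List.replicate (j'+1) (!x))))
    (by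
      have e : (List.replicate (j'+1) x ++ List.replicate (j'+1) (!x) ++
            (List.replicate j' x ++ mid ++ List.replicate j' (!x))) ++
            (List.replicate (j'+1) x ++ List.replicate (j'+1) (!x)) =
          (List.replicate (j'+1) x ++ [!x]) ++
            ((List.replicate j' (!x) ++ List.replicate j' x) ++
              (mid ++ (List.replicate j' (!x) ++
                (List.replicate (j'+1) x ++ List.replicate (j'+1) (!x))))) := by
        simp only [List.replicate_succ, List.append_assoc, List.cons_append,
          List.singleton_append, List.nil_append, List.append_nil]
      rw [← e]
      exact u0)
  have r2 := chunk_remove _ (List.replicate j' (!x) ++ List.replicate j' x) le_rfl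
    (cb_powpair' j' x)
    (List.replicate (j'+1) x ++ ([!x] ++ mid))
    ([x] ++ List.replicate (j'+1) (!x))
    (by
      have e : (List.replicate (j'+1) x ++ [!x]) ++
            (mid ++ (List.replicate j' (!x) ++
              (List.replicate (j'+1) x ++ List.replicate (j'+1) (!x)))) =
          (List.replicate (j'+1) x ++ ([!x] ++ mid)) ++
            ((List.replicate j' (!x) ++ List.replicate j' x) ++
              ([x] ++ List.replicate (j'+1) (!x))) := by
        simp only [List.replicate_succ', List.append_assoc, List.cons_append,
          List.singleton_append, List.nil_append, List.append_nil]
      rw [← e]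
      exact r1)
  have e2 : (List.replicate (j'+1) x ++ ([!x] ++ mid)) ++ ([x] ++ List.replicate (j'+1) (!x)) =
      List.replicate (j'+1) x ++ ((!x) :: (mid ++ [x])) ++ List.replicate (j'+1) (!x) := by
    simp only [List.append_assoc, List.cons_append, List.singleton_append,
      List.nil_append, List.append_nil]
  rw [e2] at r2
  exact r2

lemma main_lemma (w : Word) (hw : cb w ≠ 0) : ∀ (N : ℕ) (m : Word) (j : ℕ) (x : Bool),
    cb m = 0 → (m.length + 2*j)^2 + m.length ≤ N →
    List.replicate j x ++ m ++ List.replicate j (!x) ∈ genA {w} := by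
  intro N
  induction N with
  | zero =>
      intro m j x h0 hN
      have h1 : m.length + 2*j = 0 := by
        by_contra hne
        have h2 : 1 ≤ m.length + 2*j := Nat.pos_of_ne_zero hne
        have h3 : 1 ≤ (m.length + 2*j)^2 := by
          calc 1 = 1^2 := by norm_num
          _ ≤ (m.length + 2*j)^2 := Nat.pow_le_pow_left h2 2
        omega
      have hm : m = [] := List.length_eq_zero_iff.mp (by omega)
      have hj : j = 0 := by omega
      subst hm; subst hj
      simpa using nil_mem w hw
  | succ N ih =>
      intro m j x h0 hN
      rcases m with _ | ⟨y, rest⟩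
      · simpa using pow_mem w hw j x
      · rcases eq_or_ne rest [] with rfl | hrne
        · exfalso; cases y <;> simp [cb, List.count_cons] at h0
        · obtain ⟨mid, z, hmz⟩ : ∃ mid z, rest = mid ++ [z] :=
            ⟨rest.dropLast, rest.getLast hrne, (List.dropLast_append_getLast hrne).symm⟩
          subst hmz
          have hL : (y :: (mid ++ [z])).length = mid.length + 2 := by simp
          have hsplit0 : cb (y :: (mid ++ [z])) = cb [y] + cb mid + cb [z] := by
            rw [show (y :: (mid ++ [z])) = [y] ++ (mid ++ [z]) from rfl, cb_append, cb_append]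
            ring
          by_cases hzy : z = y
          · -- crossing case
            subst hzy
            obtain ⟨l, hl0, hlL, hlcb⟩ := crossing z mid h0
            have hlL' : l < mid.length + 2 := by
              rw [← hL]; exact hlL
            obtain ⟨l2, hl2, hl2pos⟩ : ∃ l2, mid.length + 2 = l + l2 ∧ 0 < l2 :=
              ⟨mid.length + 2 - l, by omega, by omega⟩
            have hp_len : ((z :: (mid ++ [z])).take l).length = l := by
              rw [List.length_take]; simp; omega
            have hq_len : ((z :: (mid ++ [z])).drop l).length = l2 := by
              rw [List.length_drop]; simp; omega
            have hq_cb : cb ((z :: (mid ++ [z])).drop l) = 0 := by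
              have := cb_append ((z :: (mid ++ [z])).take l) ((z :: (mid ++ [z])).drop l)
              rw [List.take_append_drop] at this
              rw [this, hlcb] at h0
              linarith
            have hA := ih ((z :: (mid ++ [z])).take l) j x hlcb (by
              rw [hp_len]
              rw [hL, hl2] at hN
              have hint := Nat.pow_le_pow_left (show l + 2*j + 1 ≤ l + l2 + 2*j by omega) 2
              have hexp : (l+2*j+1)^2 = (l+2*j)^2 + 2*(l+2*j) + 1 := by ring
              linarith)
            have hB := ih ((z :: (mid ++ [z])).drop l) j x hq_cb (by
              rw [hq_len]
              rw [hL, hl2] at hN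
              have hint := Nat.pow_le_pow_left (show l2 + 2*j + 1 ≤ l + l2 + 2*j by omega) 2
              have hexp : (l2+2*j+1)^2 = (l2+2*j)^2 + 2*(l2+2*j) + 1 := by ring
              linarith)
            have := split_step w j x _ _ hA hB
            rw [List.take_append_drop] at this
            exact this
          · have hzy' : z = !y := by cases y <;> cases z <;> simp_all
            subst hzy'
            have hmid_cb : cb mid = 0 := by
              rw [hsplit0] at h0
              cases y <;> simp [cb_single] at h0 <;> omega
            by_cases hyx : y = x
            · -- grow case
              subst hyx
              have hIH := ih mid (j+1) y hmid_cb (by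
                rw [hL] at hN
                have e1 : mid.length + 2*(j+1) = mid.length + 2 + 2*j := by ring
                rw [e1]
                linarith)
              have e : List.replicate (j+1) y ++ mid ++ List.replicate (j+1) (!y) =
                  List.replicate j y ++ (y :: (mid ++ [!y])) ++ List.replicate j (!y) := by
                rw [List.replicate_succ' (n := j) (a := y), List.replicate_succ (a := !y) (n := j)]
                simp only [List.append_assoc, List.cons_append, List.singleton_append,
                  List.nil_append, List.append_nil]
              rw [e] at hIH
              exact hIH
            · have hyx' : y = !x := by cases y <;> cases x <;> simp_all
              subst hyx'
              have hnn : (!(!x)) = x := Bool.not_not x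
              rcases j with _ | j'
              · have hIH := ih mid 1 (!x) hmid_cb (by
                  rw [hL] at hN
                  have e2 : mid.length + 2 + 2*0 = mid.length + 2 := by ring
                  have e1 : mid.length + 2*1 = mid.length + 2 := by ring
                  rw [e2] at hN
                  rw [e1]
                  linarith)
                simpa using hIH
              · have hIH := ih mid j' x hmid_cb (by
                  rw [hL] at hN
                  have hint := Nat.pow_le_pow_left
                    (show mid.length + 2*j' + 1 ≤ mid.length + 2 + 2*(j'+1) by omega) 2
                  have hexp : (mid.length+2*j'+1)^2 =
                    (mid.length+2*j')^2 + 2*(mid.length+2*j') + 1 := by ring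
                  linarith)
                have := nest_step w hw j' x mid hIH
                simpa using this


lemma cb_replicate_true (n : ℕ) : cb (List.replicate n true) = (n : ℤ) := by
  rw [cb_replicate]; simp

lemma cb_replicate_false (n : ℕ) : cb (List.replicate n false) = -(n : ℤ) := by
  rw [cb_replicate]; simp

lemma balance_zero_mem (w : Word) (hw : cb w ≠ 0) (z : Word) (h0 : cb z = 0) :
    z ∈ genA {w} := by
  have := main_lemma w hw (z.length^2 + z.length) z 0 true h0 (by simp)
  simpa using this

lemma repl_mul_mem (w : Word) (hw : cb w ≠ 0) :
    ∀ (q : ℕ) (x : Bool), List.replicate (q * (cb w).natAbs) x ∈ genA {w} := by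
  intro q
  induction q with
  | zero => intro x; simpa using nil_mem w hw
  | succ q ihq =>
      intro x
      have : (q+1) * (cb w).natAbs = q * (cb w).natAbs + (cb w).natAbs := by ring
      rw [this, List.replicate_add]
      exact genA_concat (ihq x) (block_mem w x)

lemma Adm_Wmod (k : ℕ) : Adm (Wmod k) := by
  refine ⟨?_, ?_, ?_⟩
  · intro a ha b hb
    simp only [Wmod, Set.mem_setOf_eq] at *
    rw [cb_append]
    exact dvd_add ha hb
  · intro a ha
    simp only [Wmod, Set.mem_setOf_eq] at *
    rw [cb_wconj]
    exact dvd_neg.mpr ha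
  · intro a ha b hb
    obtain ⟨u, v, x, rfl, rfl⟩ := hb
    simp only [Wmod, Set.mem_setOf_eq] at *
    have e : cb (u ++ x :: (!x) :: v) = cb (u ++ v) := by
      rw [show (x :: (!x) :: v) = [x] ++ ([!x] ++ v) from rfl]
      rw [cb_append, cb_append, cb_append, cb_append]
      cases x <;> simp [cb_single] <;> ring
    rw [e] at ha
    exact ha

lemma wmod_subset (w : Word) (hw : cb w ≠ 0) : Wmod (cb w).natAbs ⊆ genA {w} := by
  intro z hz
  have hdvd : ((cb w).natAbs : ℤ) ∣ cb z := hz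
  have hdvd' : (cb w).natAbs ∣ (cb z).natAbs :=
    Int.natAbs_dvd_natAbs.mpr (Int.natAbs_dvd.mp hdvd)
  obtain ⟨q, hq⟩ := hdvd'
  have hq' : (cb z).natAbs = q * (cb w).natAbs := by rw [hq, Nat.mul_comm]
  rcases le_or_gt 0 (cb z) with hsgn | hsgn
  · have h1 : cb (z ++ List.replicate (cb z).natAbs false) = 0 := by
      rw [cb_append, cb_replicate_false]
      omega
    have h2 := balance_zero_mem w hw _ h1
    have hrep : List.replicate (cb z).natAbs true ∈ genA {w} := by
      rw [hq']; exact repl_mul_mem w hw q true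
    have h3 := genA_concat h2 hrep
    have h4 := chunk_remove _
      (List.replicate (cb z).natAbs false ++ List.replicate (cb z).natAbs true) le_rfl
      (by rw [cb_append, cb_replicate, cb_replicate]; simp)
      z ([] : Word)
      (by simpa only [List.append_assoc, List.append_nil] using h3)
    simpa using h4
  · have h1 : cb (z ++ List.replicate (cb z).natAbs true) = 0 := by
      rw [cb_append, cb_replicate_true]
      omega
    have h2 := balance_zero_mem w hw _ h1
    have hrep : List.replicate (cb z).natAbs false ∈ genA {w} := by
      rw [hq']; exact repl_mul_mem w hw q false
    have h3 := genA_concat h2 hrep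
    have h4 := chunk_remove _
      (List.replicate (cb z).natAbs true ++ List.replicate (cb z).natAbs false) le_rfl
      (by rw [cb_append, cb_replicate, cb_replicate]; simp)
      z ([] : Word)
      (by simpa only [List.append_assoc, List.append_nil] using h3)
    simpa using h4

end Stmt8

/-- the admissible set generated by a single word `w` with
`cb w ≠ 0` is exactly the set of words whose balance is divisible by `|cb w|`. -/
theorem stmt8 (w : Word) (h : cb w ≠ 0) :
    genA {w} = Wmod (cb w).natAbs := by
  apply Set.Subset.antisymm
  · intro z hz
    rw [Stmt8.mem_genA_iff] at hz
    refine hz (Wmod (cb w).natAbs) (Stmt8.Adm_Wmod _) ?_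
    intro u hu
    rw [Set.mem_singleton_iff] at hu
    subst hu
    exact Int.natAbs_dvd.mpr dvd_rfl
  · exact Stmt8.wmod_subset w h
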